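/- Let V and W be finite-dimensional complex vector spaces, A, B ∈ End(V) nilpotent endomorphisms, Γ ∈ Hom(W,V) and Δ ∈ Hom(V,W), and suppose BA - AB = ΓΔ. Then the polynomials X(z) = id_W - Σ_{j,k ≥ 0} Δ A^j B^k Γ z^{j+k+2} and Y(z) = id_W + Σ_{j,k ≥ 0} Δ B^k A^j Γ z^{j+k+2} in End(W)[z] are two-sided inverses of each other. -/

import Mathlib

open Polynomial

section ringaux
variable {R : Type*} [Ring R]

lemma qpi_inv1 (u v p q : R) (hup : u*p = 1) (hpu : p*u = 1) (hvq : v*q = 1) (hqv : q*v = 1) :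
    p*q*(v*u - u*v)*(q*p) = q*p - p*q := by
  have e1 : p*q*(v*u)*(q*p) = q*p := by
    simp only [mul_assoc]
    rw [← mul_assoc q v, hqv, one_mul, ← mul_assoc p u, hpu, one_mul]
  have e2 : p*q*(u*v)*(q*p) = p*q := by
    simp only [mul_assoc]
    rw [← mul_assoc v q, hvq, one_mul, hup, mul_one]
  rw [mul_sub, sub_mul, e1, e2]

lemma qpi_inv2 (u v p q : R) (hup : u*p = 1) (hpu : p*u = 1) (hvq : v*q = 1) (hqv : q*v = 1) :
    q*p*(v*u - u*v)*(p*q) = q*p - p*q := by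
  have e3 : q*p*(v*u)*(p*q) = q*p := by
    simp only [mul_assoc]
    rw [← mul_assoc u p, hup, one_mul, hvq, mul_one]
  have e4 : q*p*(u*v)*(p*q) = p*q := by
    simp only [mul_assoc]
    rw [← mul_assoc p u, hpu, one_mul, ← mul_assoc q v, hqv, one_mul]
  rw [mul_sub, sub_mul, e3, e4]

lemma qpi_assemble (s t : R) (h1 : s * t = t - s) (h2 : t * s = t - s) :
    (1 - s) * (1 + t) = 1 ∧ (1 + t) * (1 - s) = 1 := by
  constructor
  · have e : (1 - s) * (1 + t) = 1 + t - s - s * t := by noncomm_ring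
    rw [e, h1]; abel
  · have e : (1 + t) * (1 - s) = 1 - s + t - t * s := by noncomm_ring
    rw [e, h2]; abel

end ringaux

section sandwich
variable {V W : Type*} [AddCommGroup V] [Module ℂ V] [AddCommGroup W] [Module ℂ W]
  (Δ : V →ₗ[ℂ] W) (Γ : W →ₗ[ℂ] V)

/-- The coefficientwise sandwich map `E ↦ Δ ∘ E ∘ Γ`. -/
noncomputable def qpiφ : Module.End ℂ V →+ Module.End ℂ W where
  toFun E := Δ ∘ₗ E ∘ₗ Γ
  map_zero' := by ext x; simp
  map_add' E F := by ext x; simp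

@[simp] lemma qpiφ_apply (E : Module.End ℂ V) : qpiφ Δ Γ E = Δ ∘ₗ E ∘ₗ Γ := rfl

/-- Coefficientwise sandwich map on polynomials. -/
noncomputable def qpiL : Polynomial (Module.End ℂ V) →+ Polynomial (Module.End ℂ W) where
  toFun f := ⟨.ofCoeff (Finsupp.mapRange (qpiφ Δ Γ) (map_zero _) f.toFinsupp.coeff)⟩
  map_zero' := by
    simp only [toFinsupp_zero, AddMonoidAlgebra.coeff_zero, Finsupp.mapRange_zero]
    rfl
  map_add' f g := by
    simp only [toFinsupp_add, AddMonoidAlgebra.coeff_add, Finsupp.mapRange_add (map_add _),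
      AddMonoidAlgebra.ofCoeff_add]
    rw [← ofFinsupp_add]

lemma qpiL_monomial (n : ℕ) (e : Module.End ℂ V) :
    qpiL Δ Γ (monomial n e) = monomial n (Δ ∘ₗ e ∘ₗ Γ) := by
  show (⟨.ofCoeff (Finsupp.mapRange (qpiφ Δ Γ) (map_zero _) (monomial n e).toFinsupp.coeff)⟩ :
      Polynomial (Module.End ℂ W)) = _
  rw [toFinsupp_monomial, AddMonoidAlgebra.coeff_single, Finsupp.mapRange_single, qpiφ_apply,
    AddMonoidAlgebra.ofCoeff_single, ofFinsupp_single]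

lemma qpiL_mul (P Q : Polynomial (Module.End ℂ V)) :
    qpiL Δ Γ P * qpiL Δ Γ Q = qpiL Δ Γ (P * C (Γ ∘ₗ Δ : Module.End ℂ V) * Q) := by
  induction P using Polynomial.induction_on' with
  | add p r hp hr => simp only [map_add, add_mul, hp, hr]
  | monomial n a =>
    induction Q using Polynomial.induction_on' with
    | add p r hp hr => simp only [map_add, mul_add, hp, hr]
    | monomial m b =>
      rw [qpiL_monomial, qpiL_monomial, monomial_mul_monomial,
        ← monomial_zero_left, monomial_mul_monomial, monomial_mul_monomial, qpiL_monomial,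
        Nat.add_zero]
      have h : (Δ ∘ₗ a ∘ₗ Γ) * (Δ ∘ₗ b ∘ₗ Γ) = Δ ∘ₗ (a * (Γ ∘ₗ Δ) * b) ∘ₗ Γ := by
        ext x
        simp [Module.End.mul_apply]
      rw [h]

end sandwich

/-- Lemma 4.6 of the paper: if `A, B` are nilpotent endomorphisms of `V` (with `A^N = B^N = 0`),
`Γ : W → V`, `Δ : V → W`, and the moment-map equation `BA - AB = ΓΔ` holds, then the polynomials
`X(z) = id_W - Σ_{j,k ≥ 0} Δ A^j B^k Γ z^(j+k+2)` and
`Y(z) = id_W + Σ_{j,k ≥ 0} Δ B^k A^j Γ z^(j+k+2)` in `End(W)[z]` are two-sided inverses. -/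
theorem quiver_polynomial_inverse
    (V W : Type*) [AddCommGroup V] [Module ℂ V] [AddCommGroup W] [Module ℂ W]
    [FiniteDimensional ℂ V] [FiniteDimensional ℂ W]
    (A B : Module.End ℂ V) (Γ : W →ₗ[ℂ] V) (Δ : V →ₗ[ℂ] W)
    (hA : IsNilpotent A) (hB : IsNilpotent B)
    (N : ℕ) (hAN : A ^ N = 0) (hBN : B ^ N = 0)
    (hmm : B * A - A * B = Γ ∘ₗ Δ)
    (X Y : Polynomial (Module.End ℂ W))
    (hX : X = 1 - ∑ j ∈ Finset.range N, ∑ k ∈ Finset.range N,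
      Polynomial.C ((Δ ∘ₗ ((A ^ j * B ^ k : Module.End ℂ V) : V →ₗ[ℂ] V)) ∘ₗ Γ) *
        Polynomial.X ^ (j + k + 2))
    (hY : Y = 1 + ∑ j ∈ Finset.range N, ∑ k ∈ Finset.range N,
      Polynomial.C ((Δ ∘ₗ ((B ^ k * A ^ j : Module.End ℂ V) : V →ₗ[ℂ] V)) ∘ₗ Γ) *
        Polynomial.X ^ (j + k + 2)) :
    X * Y = 1 ∧ Y * X = 1 := by
  subst hX hY
  set a : Polynomial (Module.End ℂ V) := Polynomial.monomial 1 A with ha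
  set b : Polynomial (Module.End ℂ V) := Polynomial.monomial 1 B with hb
  set p : Polynomial (Module.End ℂ V) := ∑ j ∈ Finset.range N, a ^ j with hp
  set q : Polynomial (Module.End ℂ V) := ∑ k ∈ Finset.range N, b ^ k with hq
  have haN : a ^ N = 0 := by
    rw [ha, Polynomial.monomial_pow, one_mul, hAN, Polynomial.monomial_zero_right]
  have hbN : b ^ N = 0 := by
    rw [hb, Polynomial.monomial_pow, one_mul, hBN, Polynomial.monomial_zero_right]
  have hpu : p * (1 - a) = 1 := by
    have h := geom_sum_mul a N
    rw [← hp, haN, zero_sub] at h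
    rw [show p * (1 - a) = -(p * (a - 1)) by
      rw [mul_sub, mul_sub, mul_one, neg_sub], h, neg_neg]
  have hup : (1 - a) * p = 1 := by
    have h := mul_geom_sum a N
    rw [← hp, haN, zero_sub] at h
    rw [show (1 - a) * p = -((a - 1) * p) by
      rw [sub_mul, sub_mul, one_mul, neg_sub], h, neg_neg]
  have hqv : q * (1 - b) = 1 := by
    have h := geom_sum_mul b N
    rw [← hq, hbN, zero_sub] at h
    rw [show q * (1 - b) = -(q * (b - 1)) by
      rw [mul_sub, mul_sub, mul_one, neg_sub], h, neg_neg]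
  have hvq : (1 - b) * q = 1 := by
    have h := mul_geom_sum b N
    rw [← hq, hbN, zero_sub] at h
    rw [show (1 - b) * q = -((b - 1) * q) by
      rw [sub_mul, sub_mul, one_mul, neg_sub], h, neg_neg]
  have hG : Polynomial.C (Γ ∘ₗ Δ : Module.End ℂ V) * Polynomial.X ^ 2 =
      (1 - b) * (1 - a) - (1 - a) * (1 - b) := by
    have hcomm : (1 - b) * (1 - a) - (1 - a) * (1 - b) = b * a - a * b := by
      simp only [mul_sub, sub_mul, mul_one, one_mul]
      abel
    rw [hcomm, ha, hb, Polynomial.monomial_mul_monomial, Polynomial.monomial_mul_monomial,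
      ← map_sub, hmm, Polynomial.C_mul_X_pow_eq_monomial]
  have hPQ : p * q * Polynomial.X ^ 2 = ∑ j ∈ Finset.range N, ∑ k ∈ Finset.range N,
      Polynomial.monomial (j + k + 2) ((A ^ j * B ^ k : Module.End ℂ V)) := by
    rw [hp, hq, Finset.sum_mul_sum]
    simp only [Finset.sum_mul]
    refine Finset.sum_congr rfl fun j _ => Finset.sum_congr rfl fun k _ => ?_
    rw [ha, hb, Polynomial.monomial_pow, Polynomial.monomial_pow, one_mul, one_mul,
      Polynomial.monomial_mul_monomial, Polynomial.X_pow_eq_monomial,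
      Polynomial.monomial_mul_monomial, mul_one]
  have hQP : q * p * Polynomial.X ^ 2 = ∑ j ∈ Finset.range N, ∑ k ∈ Finset.range N,
      Polynomial.monomial (j + k + 2) ((B ^ k * A ^ j : Module.End ℂ V)) := by
    rw [hq, hp, Finset.sum_mul_sum]
    simp only [Finset.sum_mul]
    rw [Finset.sum_comm]
    refine Finset.sum_congr rfl fun j _ => Finset.sum_congr rfl fun k _ => ?_
    rw [ha, hb, Polynomial.monomial_pow, Polynomial.monomial_pow, one_mul, one_mul,
      Polynomial.monomial_mul_monomial, Polynomial.X_pow_eq_monomial,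
      Polynomial.monomial_mul_monomial, mul_one, Nat.add_comm k j]
  have hSdef : (∑ j ∈ Finset.range N, ∑ k ∈ Finset.range N,
      Polynomial.C ((Δ ∘ₗ ((A ^ j * B ^ k : Module.End ℂ V) : V →ₗ[ℂ] V)) ∘ₗ Γ) *
        Polynomial.X ^ (j + k + 2)) = qpiL Δ Γ (p * q * Polynomial.X ^ 2) := by
    rw [hPQ, map_sum]
    refine Finset.sum_congr rfl fun j _ => ?_
    rw [map_sum]
    refine Finset.sum_congr rfl fun k _ => ?_
    rw [qpiL_monomial, Polynomial.C_mul_X_pow_eq_monomial, LinearMap.comp_assoc]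
  have hTdef : (∑ j ∈ Finset.range N, ∑ k ∈ Finset.range N,
      Polynomial.C ((Δ ∘ₗ ((B ^ k * A ^ j : Module.End ℂ V) : V →ₗ[ℂ] V)) ∘ₗ Γ) *
        Polynomial.X ^ (j + k + 2)) = qpiL Δ Γ (q * p * Polynomial.X ^ 2) := by
    rw [hQP, map_sum]
    refine Finset.sum_congr rfl fun j _ => ?_
    rw [map_sum]
    refine Finset.sum_congr rfl fun k _ => ?_
    rw [qpiL_monomial, Polynomial.C_mul_X_pow_eq_monomial, LinearMap.comp_assoc]
  have key1 : qpiL Δ Γ (p * q * Polynomial.X ^ 2) * qpiL Δ Γ (q * p * Polynomial.X ^ 2) =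
      qpiL Δ Γ (q * p * Polynomial.X ^ 2) - qpiL Δ Γ (p * q * Polynomial.X ^ 2) := by
    rw [qpiL_mul, ← map_sub]
    refine congrArg (qpiL Δ Γ) ?_
    calc p * q * Polynomial.X ^ 2 * Polynomial.C (Γ ∘ₗ Δ : Module.End ℂ V) *
          (q * p * Polynomial.X ^ 2)
        = p * q * (Polynomial.C (Γ ∘ₗ Δ : Module.End ℂ V) * Polynomial.X ^ 2) *
          (q * p * Polynomial.X ^ 2) := by
          rw [mul_assoc (p * q) (Polynomial.X ^ 2) (Polynomial.C _), Polynomial.X_pow_mul]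
      _ = p * q * ((1 - b) * (1 - a) - (1 - a) * (1 - b)) * (q * p) * Polynomial.X ^ 2 := by
          rw [hG, ← mul_assoc (p * q * ((1 - b) * (1 - a) - (1 - a) * (1 - b))) (q * p)
            (Polynomial.X ^ 2)]
      _ = (q * p - p * q) * Polynomial.X ^ 2 := by
          rw [qpi_inv1 (1 - a) (1 - b) p q hup hpu hvq hqv]
      _ = q * p * Polynomial.X ^ 2 - p * q * Polynomial.X ^ 2 := by rw [sub_mul]
  have key2 : qpiL Δ Γ (q * p * Polynomial.X ^ 2) * qpiL Δ Γ (p * q * Polynomial.X ^ 2) =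
      qpiL Δ Γ (q * p * Polynomial.X ^ 2) - qpiL Δ Γ (p * q * Polynomial.X ^ 2) := by
    rw [qpiL_mul, ← map_sub]
    refine congrArg (qpiL Δ Γ) ?_
    calc q * p * Polynomial.X ^ 2 * Polynomial.C (Γ ∘ₗ Δ : Module.End ℂ V) *
          (p * q * Polynomial.X ^ 2)
        = q * p * (Polynomial.C (Γ ∘ₗ Δ : Module.End ℂ V) * Polynomial.X ^ 2) *
          (p * q * Polynomial.X ^ 2) := by
          rw [mul_assoc (q * p) (Polynomial.X ^ 2) (Polynomial.C _), Polynomial.X_pow_mul]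
      _ = q * p * ((1 - b) * (1 - a) - (1 - a) * (1 - b)) * (p * q) * Polynomial.X ^ 2 := by
          rw [hG, ← mul_assoc (q * p * ((1 - b) * (1 - a) - (1 - a) * (1 - b))) (p * q)
            (Polynomial.X ^ 2)]
      _ = (q * p - p * q) * Polynomial.X ^ 2 := by
          rw [qpi_inv2 (1 - a) (1 - b) p q hup hpu hvq hqv]
      _ = q * p * Polynomial.X ^ 2 - p * q * Polynomial.X ^ 2 := by rw [sub_mul]
  rw [hSdef, hTdef]
  exact qpi_assemble _ _ key1 key2
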